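/- arXiv:1808.09738 — 2 statements merged into one kernel-verified Lean document; each statement's English description precedes it below -/
import Mathlib

section
/- Let 𝒳 be a non-trivial well-pointed coherent category in which the unique morphism X → 1 is a retraction for every X ≇ 0, and assume 𝒳 is mono-complete. Then for every morphism f : X → Y in 𝒳 and every subset T ⊆ pt(X), one has pt f (cl T) = cl(pt f (T)), where cl denotes the closure operator on pt(X) on the left and on pt(Y) on the right. -/
open CategoryTheory CategoryTheory.Limits Opposite

universe w' w v u

namespace Paper

variable {C : Type u} [Category.{v} C]

/-- "X ≇ 0": the object `X` is not initial. -/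
def NonInitial (X : C) : Prop := IsInitial X → False

/-- The category is non-trivial: `0 ≇ 1`, i.e. no object is both initial and terminal. -/
def NonTrivialCat (C : Type u) [Category.{v} C] : Prop :=
  ∀ X : C, IsInitial X → IsTerminal X → False

section Terminal
variable (C) [HasTerminal C]

/-- The category is well-pointed: the functor of points `pt = Hom(1, -)` is faithful. -/
def WellPointed : Prop :=
  ∀ ⦃X Y : C⦄ (f g : X ⟶ Y), (∀ p : ⊤_ C ⟶ X, p ≫ f = p ≫ g) → f = g

/-- The unique morphism `X ⟶ 1` is a retraction for every `X ≇ 0`. -/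
def EnoughPoints : Prop :=
  ∀ X : C, NonInitial X → Nonempty (SplitEpi (terminal.from X))

end Terminal

/-- `b` is the bottom element of `Sub(X)`. -/
def IsBotIn {X : C} (b : Subobject X) : Prop := ∀ S : Subobject X, b ≤ S

/-- `S` is an atom of the subobject lattice `Sub(X)`. -/
def IsAtomIn {X : C} (S : Subobject X) : Prop :=
  ¬ IsBotIn S ∧ ∀ T : Subobject X, T < S → IsBotIn T

/-- `Sub(X)` is atomic: every subobject is the supremum of the atoms below it. -/
def AtomicSubobjects (X : C) : Prop :=
  ∀ S : Subobject X, IsLUB {A : Subobject X | IsAtomIn A ∧ A ≤ S} S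

/-- `S` is a complemented subobject: it has a complement `T` with `S ⊓ T = ⊥`, `S ⊔ T = ⊤`. -/
def IsComplementedSub {X : C} (S : Subobject X) : Prop :=
  ∃ T m : Subobject X, IsGLB {S, T} m ∧ IsBotIn m ∧ IsLUB {S, T} ⊤

/-- A (non-empty) filter of the Boolean center `B(X)` of `Sub(X)`. -/
structure CenterFilter (X : C) where
  carrier : Set (Subobject X)
  mem_complemented : ∀ S ∈ carrier, IsComplementedSub S
  nonempty : carrier.Nonempty
  inf_mem : ∀ S ∈ carrier, ∀ T ∈ carrier, ∀ m : Subobject X, IsGLB {S, T} m → m ∈ carrier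
  mem_of_le : ∀ S ∈ carrier, ∀ T : Subobject X, IsComplementedSub T → S ≤ T → T ∈ carrier

theorem CenterFilter.ext' {X : C} {F G : CenterFilter X} (h : F.carrier = G.carrier) : F = G := by
  cases F; cases G; cases h; rfl

/-- Filters of the Boolean center, ordered by reverse inclusion. -/
instance (X : C) : PartialOrder (CenterFilter X) where
  le F G := G.carrier ⊆ F.carrier
  le_refl _ := subset_rfl
  le_trans _ _ _ h1 h2 := fun _ hx => h1 (h2 hx)
  le_antisymm _ _ h1 h2 := CenterFilter.ext' (Set.Subset.antisymm h2 h1)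

/-- An object `X` is filtral if `Sub(X)` is isomorphic, as a lattice, to the lattice of
non-empty filters of the Boolean center of `Sub(X)`. -/
def FiltralObject (X : C) : Prop :=
  Nonempty (Subobject X ≃o CenterFilter X)

/-- A category is filtral if every object is covered by a filtral one. -/
def Filtral (C : Type u) [Category.{v} C] : Prop :=
  ∀ Y : C, ∃ (X : C) (f : X ⟶ Y), Nonempty (RegularEpi f) ∧ FiltralObject X

/-- `Sub(X)` is a complete lattice (every subset has an infimum). -/
def MonoCompleteAt (X : C) : Prop :=
  ∀ s : Set (Subobject X), ∃ m : Subobject X, IsGLB s m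

/-- The category is mono-complete: every subobject poset is a complete lattice. -/
def MonoComplete (C : Type u) [Category.{v} C] : Prop := ∀ X : C, MonoCompleteAt X

section Points
variable [HasTerminal C]

/-- `Vs S` is the set of points of `X` factoring through the subobject `S`. -/
def Vs {X : C} (S : Subobject X) : Set (⊤_ C ⟶ X) := {p | S.Factors p}

open Classical in
/-- `Cg T` is the smallest subobject of `X` through which every point in `T` factors
(defined whenever the relevant infimum exists). -/
noncomputable def Cg {X : C} (T : Set (⊤_ C ⟶ X)) : Subobject X :=
  if h : ∃ m : Subobject X, IsGLB {S : Subobject X | ∀ p ∈ T, S.Factors p} m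
  then h.choose else ⊤

/-- The closure operator `cl = Vs ∘ Cg` on the power set of `pt X`. -/
noncomputable def cl {X : C} (T : Set (⊤_ C ⟶ X)) : Set (⊤_ C ⟶ X) := Vs (Cg T)

end Points

/-- Images are stable under pullback (together with finite limits and images, this is
the definition of a regular category). -/
class StableImages (C : Type u) [Category.{v} C] [HasFiniteLimits C] [HasImages C] : Prop where
  image_pullback : ∀ {X Y Z : C} (f : X ⟶ Y) (g : Z ⟶ Y),
    (Subobject.pullback g).obj (imageSubobject f) = imageSubobject (pullback.snd f g)

/-- The extra structure of a coherent category: each `Sub(X)` has finite joins and these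
are preserved by the pullback functors. -/
class CoherentJoins (C : Type u) [Category.{v} C] [HasPullbacks C] : Prop where
  exists_bot : ∀ X : C, ∃ b : Subobject X, IsBotIn b
  exists_sup : ∀ {X : C} (S T : Subobject X), ∃ U : Subobject X, IsLUB {S, T} U
  pullback_bot : ∀ {X Y : C} (f : X ⟶ Y) (b : Subobject Y),
    IsBotIn b → IsBotIn ((Subobject.pullback f).obj b)
  pullback_sup : ∀ {X Y : C} (f : X ⟶ Y) (S T U : Subobject Y), IsLUB {S, T} U →
    IsLUB {(Subobject.pullback f).obj S, (Subobject.pullback f).obj T}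
      ((Subobject.pullback f).obj U)

/-- An internal equivalence relation: a jointly-monic pair which is reflexive, symmetric and
transitive (expressed via generalised elements). -/
structure IsEquivRelPair {R X : C} (r₁ r₂ : R ⟶ X) : Prop where
  jointlyMono : ∀ {Z : C} (a b : Z ⟶ R), a ≫ r₁ = b ≫ r₁ → a ≫ r₂ = b ≫ r₂ → a = b
  refl : ∀ {Z : C} (a : Z ⟶ X), ∃ h : Z ⟶ R, h ≫ r₁ = a ∧ h ≫ r₂ = a
  symm : ∀ {Z : C} (a b : Z ⟶ X), (∃ h : Z ⟶ R, h ≫ r₁ = a ∧ h ≫ r₂ = b) →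
    ∃ h : Z ⟶ R, h ≫ r₁ = b ∧ h ≫ r₂ = a
  trans : ∀ {Z : C} (a b c : Z ⟶ X), (∃ h : Z ⟶ R, h ≫ r₁ = a ∧ h ≫ r₂ = b) →
    (∃ h : Z ⟶ R, h ≫ r₁ = b ∧ h ≫ r₂ = c) →
    ∃ h : Z ⟶ R, h ≫ r₁ = a ∧ h ≫ r₂ = c

/-- Every internal equivalence relation is effective: it is the kernel pair of its
coequaliser. -/
def EffectiveEquivRels (C : Type u) [Category.{v} C] : Prop :=
  ∀ {R X : C} (r₁ r₂ : R ⟶ X), IsEquivRelPair r₁ r₂ →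
    ∃ (Y : C) (q : X ⟶ Y) (w : r₁ ≫ q = r₂ ≫ q),
      Nonempty (IsColimit (Cofork.ofπ q w)) ∧ Nonempty (IsLimit (PullbackCone.mk r₁ r₂ w))

/-- An object is decidable if its diagonal is a complemented subobject of `X ⨯ X`. -/
def DecidableObj [HasBinaryProducts C] (X : C) : Prop :=
  ∃ (Y : C) (g : Y ⟶ X ⨯ X), Nonempty (IsColimit (BinaryCofan.mk (diag X) g))

/-- An object is pro-decidable if it is a codirected (cofiltered) limit of decidable objects. -/
def ProDecidableObj [HasBinaryProducts C] (X : C) : Prop :=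
  ∃ (J : Type v) (_ : SmallCategory J) (_ : IsCofiltered J) (D : J ⥤ C) (c : Cone D),
    (∀ j, DecidableObj (D.obj j)) ∧ Nonempty (IsLimit c) ∧ Nonempty (c.pt ≅ X)



section Aux

lemma mono_from_terminal [HasTerminal C] {Y : C} (r : ⊤_ C ⟶ Y) : Mono r :=
  ⟨fun _ _ _ => terminal.hom_ext _ _⟩

lemma Cg_isGLB [HasTerminal C] {X : C} (h : MonoCompleteAt X) (T : Set (⊤_ C ⟶ X)) :
    IsGLB {S : Subobject X | ∀ p ∈ T, S.Factors p} (Cg T) := by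
  have hex := h {S : Subobject X | ∀ p ∈ T, S.Factors p}
  rw [Cg, dif_pos hex]
  exact hex.choose_spec

lemma factors_iff_mk_le {Y Z : C} [WellPowered.{v} C] {S : Subobject Y} {p : Z ⟶ Y} [Mono p] :
    S.Factors p ↔ Subobject.mk p ≤ S := by
  constructor
  · intro h
    obtain ⟨g, hg⟩ := (S.factors_iff p).1 h
    exact Subobject.mk_le_of_comm g hg
  · intro h
    exact Subobject.factors_of_le _ h (Subobject.mk_factors_self p)

lemma pullback_obj_mk [WellPowered.{v} C] [HasPullbacks C] {A X Y : C} (g : A ⟶ Y) [Mono g]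
    (f : X ⟶ Y) :
    (Subobject.pullback f).obj (Subobject.mk g) = Subobject.mk (pullback.snd g f) := by
  apply Quotient.sound
  exact ⟨MonoOver.isoMk (Iso.refl _) (by simp)⟩

lemma pullback_factors_iff [WellPowered.{v} C] [HasPullbacks C] {X Y : C} (f : X ⟶ Y)
    (S : Subobject Y) {Z : C} (q : Z ⟶ X) :
    ((Subobject.pullback f).obj S).Factors q ↔ S.Factors (q ≫ f) := by
  induction S using Subobject.ind with
  | _ g =>
    rw [pullback_obj_mk, Subobject.mk_factors_iff, Subobject.mk_factors_iff]
    constructor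
    · rintro ⟨k, hk⟩
      refine ⟨k ≫ pullback.fst g f, ?_⟩
      have hk' : k ≫ pullback.snd g f = q := hk
      show (k ≫ pullback.fst g f) ≫ g = q ≫ f
      exact (Category.assoc _ _ _).trans ((congrArg (fun t : pullback g f ⟶ Y => k ≫ t)
        pullback.condition).trans ((Category.assoc _ _ _).symm.trans (congrArg (· ≫ f) hk')))
    · rintro ⟨k, hk⟩
      exact ⟨pullback.lift k q hk, pullback.lift_snd _ _ _⟩

lemma eq_top_of_factors_id [WellPowered.{v} C] [HasPullbacks C] {Z : C} (S : Subobject Z)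
    (h : S.Factors (𝟙 Z)) : S = ⊤ := by
  have hv := S.factorThru_arrow (𝟙 Z) h
  have : IsIso S.arrow := by
    refine ⟨S.factorThru (𝟙 Z) h, ?_, hv⟩
    rw [← cancel_mono S.arrow, Category.assoc, hv, Category.comp_id, Category.id_comp]
  exact (Subobject.isIso_arrow_iff_eq_top S).1 this

end Aux

/-- For every morphism `f : X ⟶ Y` and every `T ⊆ pt X`, `pt f (cl T) = cl (pt f T)`. -/
theorem pt_image_cl
    [WellPowered.{v} C] [HasFiniteLimits C] [HasImages C] [StableImages C] [CoherentJoins C]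
    (hnt : NonTrivialCat C) (hwp : WellPointed C) (hpt : EnoughPoints C)
    (hmc : MonoComplete C) :
    ∀ {X Y : C} (f : X ⟶ Y) (T : Set (⊤_ C ⟶ X)),
      (fun p : ⊤_ C ⟶ X => p ≫ f) '' cl T = cl ((fun p : ⊤_ C ⟶ X => p ≫ f) '' T) := by
  intro X Y f T
  have hX := Cg_isGLB (hmc X) T
  have hY := Cg_isGLB (hmc Y) ((fun p : ⊤_ C ⟶ X => p ≫ f) '' T)
  ext r
  simp only [Set.mem_image, cl, Vs, Set.mem_setOf_eq]
  constructor
  · rintro ⟨p, hp, rfl⟩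
    have hmemA : ((Subobject.pullback f).obj (Cg ((fun p : ⊤_ C ⟶ X => p ≫ f) '' T))) ∈
        {S : Subobject X | ∀ q ∈ T, S.Factors q} := by
      intro q hq
      rw [pullback_factors_iff]
      haveI := mono_from_terminal (q ≫ f)
      refine factors_iff_mk_le.2 (hY.2 ?_)
      intro S hS
      exact factors_iff_mk_le.1 (hS _ ⟨q, hq, rfl⟩)
    have h1 : Cg T ≤ (Subobject.pullback f).obj (Cg ((fun p : ⊤_ C ⟶ X => p ≫ f) '' T)) :=
      hX.1 hmemA
    exact (pullback_factors_iff f _ p).1 (Subobject.factors_of_le p h1 hp)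
  · intro hr
    have himg : Cg ((fun p : ⊤_ C ⟶ X => p ≫ f) '' T) ≤ imageSubobject ((Cg T).arrow ≫ f) := by
      apply hY.1
      rintro r' ⟨q, hq, rfl⟩
      have hqA : (Cg T).Factors q := by
        haveI := mono_from_terminal q
        refine factors_iff_mk_le.2 (hX.2 ?_)
        intro S hS
        exact factors_iff_mk_le.1 (hS q hq)
      have hh := (Cg T).factorThru_arrow q hqA
      have he : ((Cg T).factorThru q hqA ≫ factorThruImageSubobject ((Cg T).arrow ≫ f)) ≫
          (imageSubobject ((Cg T).arrow ≫ f)).arrow = q ≫ f := by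
        rw [Category.assoc, imageSubobject_arrow_comp, ← Category.assoc, hh]
      show (imageSubobject ((Cg T).arrow ≫ f)).Factors (q ≫ f)
      exact he ▸ Subobject.factors_comp_arrow _
    have hrim := Subobject.factors_of_le r himg hr
    haveI : Mono r := mono_from_terminal r
    have himP : imageSubobject (pullback.snd ((Cg T).arrow ≫ f) r) = ⊤ := by
      rw [← StableImages.image_pullback ((Cg T).arrow ≫ f) r]
      apply eq_top_of_factors_id
      rw [pullback_factors_iff, Category.id_comp]
      exact hrim
    by_cases hP : NonInitial (Limits.pullback ((Cg T).arrow ≫ f) r)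
    · obtain ⟨sec⟩ := hpt _ hP
      refine ⟨sec.section_ ≫ pullback.fst ((Cg T).arrow ≫ f) r ≫ (Cg T).arrow, ?_, ?_⟩
      · rw [← Category.assoc]
        exact Subobject.factors_comp_arrow _
      · have hsnd : sec.section_ ≫ pullback.snd ((Cg T).arrow ≫ f) r = 𝟙 (⊤_ C) :=
          terminal.hom_ext _ _
        have key : pullback.fst ((Cg T).arrow ≫ f) r ≫ (Cg T).arrow ≫ f =
            pullback.snd ((Cg T).arrow ≫ f) r ≫ r := pullback.condition
        calc (sec.section_ ≫ pullback.fst ((Cg T).arrow ≫ f) r ≫ (Cg T).arrow) ≫ f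
            = sec.section_ ≫ (pullback.fst ((Cg T).arrow ≫ f) r ≫ (Cg T).arrow ≫ f) := by
              simp only [Category.assoc]
          _ = sec.section_ ≫ (pullback.snd ((Cg T).arrow ≫ f) r ≫ r) := by rw [key]
          _ = (sec.section_ ≫ pullback.snd ((Cg T).arrow ≫ f) r) ≫ r := by
              simp only [Category.assoc]
          _ = r := by rw [hsnd, Category.id_comp]
    · exfalso
      have hI : Nonempty (IsInitial (Limits.pullback ((Cg T).arrow ≫ f) r)) := by
        by_contra h
        exact hP fun hi => h ⟨hi⟩
      obtain ⟨hI⟩ := hI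
      obtain ⟨b, hb⟩ := CoherentJoins.exists_bot (C := C) (⊤_ C)
      have h1 : imageSubobject (pullback.snd ((Cg T).arrow ≫ f) r) ≤ b :=
        imageSubobject_le _ (hI.to (b : C)) (terminal.hom_ext _ _)
      have hb_top : (⊤ : Subobject (⊤_ C)) ≤ b := himP ▸ h1
      have hbfac : b.Factors (𝟙 (⊤_ C)) :=
        Subobject.factors_of_le _ hb_top (Subobject.top_factors _)
      have hall : ∀ (Z : C) (S : Subobject Z), S = ⊤ := by
        intro Z S
        apply eq_top_of_factors_id
        have hb' : IsBotIn ((Subobject.pullback (terminal.from Z)).obj b) :=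
          CoherentJoins.pullback_bot _ b hb
        have hfacb : ((Subobject.pullback (terminal.from Z)).obj b).Factors (𝟙 Z) := by
          rw [pullback_factors_iff, Category.id_comp]
          simpa using Subobject.factors_of_factors_right (terminal.from Z) hbfac
        exact Subobject.factors_of_le _ (hb' S) hfacb
      have hpar : ∀ {Z W : C} (u v' : Z ⟶ W), u = v' := by
        intro Z W u v'
        have hmk := hall Z (Subobject.mk (equalizer.ι u v'))
        have hiso : IsIso (equalizer.ι u v') := (Subobject.isIso_iff_mk_eq_top _).2 hmk
        rw [← cancel_epi (equalizer.ι u v')]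
        exact equalizer.condition u v'
      have hterm : IsTerminal (Limits.pullback ((Cg T).arrow ≫ f) r) := by
        refine IsTerminal.ofUniqueHom (fun Z => ?_) (fun Z m => hpar _ _)
        haveI : Mono (pullback.snd (terminal.from (Limits.pullback ((Cg T).arrow ≫ f) r))
            (terminal.from Z)) := ⟨fun _ _ _ => hpar _ _⟩
        have hmk := hall Z (Subobject.mk (pullback.snd
          (terminal.from (Limits.pullback ((Cg T).arrow ≫ f) r)) (terminal.from Z)))
        have hiso : IsIso (pullback.snd (terminal.from (Limits.pullback ((Cg T).arrow ≫ f) r))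
            (terminal.from Z)) := (Subobject.isIso_iff_mk_eq_top _).2 hmk
        exact inv (pullback.snd (terminal.from (Limits.pullback ((Cg T).arrow ≫ f) r))
          (terminal.from Z)) ≫
          pullback.fst (terminal.from (Limits.pullback ((Cg T).arrow ≫ f) r)) (terminal.from Z)
      exact hnt _ hI hterm

end Paper
end

section
/- Let 𝒳 be a non-trivial well-pointed coherent category in which the unique morphism X → 1 is a retraction for every X ≇ 0, and assume 𝒳 is mono-complete. Then for every object X of 𝒳 the closure operator cl on the power set of pt(X) is topological: cl(∅) = ∅ and cl(T₁ ∪ T₂) = cl(T₁) ∪ cl(T₂) for all T₁, T₂ ⊆ pt(X). -/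
open CategoryTheory CategoryTheory.Limits Opposite

universe w' w v u

namespace Paper

variable {C : Type u} [Category.{v} C]

-- ==== auxiliary lemmas ====

lemma factors_pullback_iff [HasPullbacks C] {X Y Z : C} (f : Z ⟶ Y) (S : Subobject Y) (g : X ⟶ Z) :
    ((Subobject.pullback f).obj S).Factors g ↔ S.Factors (g ≫ f) := by
  induction' S using Quotient.inductionOn' with m
  show MonoOver.Factors _ _ ↔ MonoOver.Factors _ _
  constructor
  · rintro ⟨u, hu⟩
    have hu' : u ≫ pullback.snd m.arrow f = g := hu
    refine ⟨u ≫ pullback.fst m.arrow f, ?_⟩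
    exact (Category.assoc _ _ _).trans ((congrArg (u ≫ ·) pullback.condition).trans ((Category.assoc _ _ _).symm.trans (congrArg (· ≫ f) hu')))
  · rintro ⟨u, hu⟩
    exact ⟨pullback.lift u g hu, pullback.lift_snd _ _ _⟩

lemma point_mono [HasTerminal C] {X : C} (p : ⊤_ C ⟶ X) : Mono p :=
  ⟨fun a b h => by
    have : p ≫ terminal.from X = 𝟙 (⊤_ C) := Subsingleton.elim _ _
    calc a = a ≫ p ≫ terminal.from X := by rw [this, Category.comp_id]
    _ = b ≫ p ≫ terminal.from X := by rw [← Category.assoc, h, Category.assoc]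
    _ = b := by rw [this, Category.comp_id]⟩

lemma factors_id_of_point [HasTerminal C] {A : Subobject (⊤_ C)} (s : ⊤_ C ⟶ (A : C)) :
    A.Factors (𝟙 (⊤_ C)) := by
  have : s ≫ A.arrow = 𝟙 (⊤_ C) := Subsingleton.elim _ _
  exact this ▸ Subobject.factors_comp_arrow s

lemma absurd_of_point_in_bot [HasTerminal C] [HasEqualizers C]
    (hnt : NonTrivialCat C) (hwp : WellPointed C) (hpt : EnoughPoints C)
    {X : C} {b : Subobject X} (hb : IsBotIn b) {p : ⊤_ C ⟶ X} (hp : b.Factors p) : False := by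
  haveI : Mono p := point_mono p
  -- Step 1: every mono into the terminal object is split epi
  have step1 : ∀ {Y : C} (m : Y ⟶ ⊤_ C), Mono m → ∃ l : ⊤_ C ⟶ Y, l ≫ m = 𝟙 (⊤_ C) := by
    intro Y m hm
    haveI := hm
    have hT : (Subobject.mk (m ≫ p)).Factors p :=
      Subobject.factors_of_le p (hb _) hp
    obtain ⟨l, hl⟩ := (Subobject.mk_factors_iff (m ≫ p) p).mp hT
    have hl' : l ≫ (m ≫ p) = p := hl
    refine ⟨l, ?_⟩
    have : (l ≫ m) ≫ p = 𝟙 (⊤_ C) ≫ p := by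
      exact (Category.assoc _ _ _).trans (hl'.trans (Category.id_comp p).symm)
    exact (cancel_mono p).mp this
  -- Step 2: any two points of any object are equal
  have step2 : ∀ {Y : C} (q r : ⊤_ C ⟶ Y), q = r := by
    intro Y q r
    obtain ⟨l, hl⟩ := step1 (equalizer.ι q r) inferInstance
    calc q = 𝟙 _ ≫ q := (Category.id_comp q).symm
    _ = l ≫ equalizer.ι q r ≫ q := by rw [← hl, Category.assoc]
    _ = l ≫ equalizer.ι q r ≫ r := by rw [equalizer.condition]
    _ = 𝟙 _ ≫ r := by rw [← Category.assoc, hl]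
    _ = r := Category.id_comp r
  -- Step 3: any two parallel morphisms are equal
  have step3 : ∀ {Y Z : C} (f g : Y ⟶ Z), f = g := fun f g =>
    hwp f g fun q => step2 _ _
  -- Step 4: the terminal object is initial
  have init : IsInitial (⊤_ C) := by
    apply IsInitial.ofUniqueHom (fun Y => ?_) (fun Y m => step3 _ _)
    by_cases h : Nonempty (IsInitial Y)
    · have hm : Mono (h.some.to (⊤_ C)) := ⟨fun a b _ => step3 a b⟩
      exact (step1 _ hm).choose
    · exact ((hpt Y (fun hi => h ⟨hi⟩)).some).section_
  exact hnt _ init terminalIsTerminal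


lemma factors_sup [HasTerminal C] [HasPullbacks C] [CoherentJoins C]
    (hpt : EnoughPoints C)
    {X : C} {S S' U : Subobject X} (hU : IsLUB {S, S'} U) {p : ⊤_ C ⟶ X}
    (hp : U.Factors p) : S.Factors p ∨ S'.Factors p := by
  set A := (Subobject.pullback p).obj S with hA
  set B := (Subobject.pullback p).obj S' with hB
  have hlub : IsLUB {A, B} ((Subobject.pullback p).obj U) :=
    CoherentJoins.pullback_sup p S S' U hU
  have hV : ((Subobject.pullback p).obj U).Factors (𝟙 (⊤_ C)) :=
    (factors_pullback_iff p U (𝟙 _)).mpr (by simpa using hp)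
  by_cases hA1 : A.Factors (𝟙 (⊤_ C))
  · left
    have := (factors_pullback_iff p S (𝟙 _)).mp hA1
    simpa using this
  · right
    have hInit : Nonempty (IsInitial (A : C)) := by
      by_contra h
      obtain ⟨se⟩ := hpt (A : C) (fun hi => h ⟨hi⟩)
      exact hA1 (factors_id_of_point se.section_)
    have hAB : A ≤ B :=
      Subobject.le_of_comm (hInit.some.to (B : C)) (Subsingleton.elim _ _)
    have hub : B ∈ upperBounds {A, B} := by
      intro x hx
      rcases hx with h | h
      · exact h ▸ hAB
      · exact h ▸ le_rfl
    have hBF : B.Factors (𝟙 (⊤_ C)) :=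
      Subobject.factors_of_le _ (hlub.2 hub) hV
    have := (factors_pullback_iff p S' (𝟙 _)).mp hBF
    simpa using this

lemma cg_isGLB [HasTerminal C] {X : C} (hmc : MonoCompleteAt X) (T : Set (⊤_ C ⟶ X)) :
    IsGLB {S : Subobject X | ∀ p ∈ T, S.Factors p} (Cg T) := by
  have h : ∃ m : Subobject X, IsGLB {S : Subobject X | ∀ p ∈ T, S.Factors p} m := hmc _
  rw [Cg, dif_pos h]
  exact h.choose_spec

lemma cg_factors [HasTerminal C] {X : C} (hmc : MonoCompleteAt X)
    {T : Set (⊤_ C ⟶ X)} {p : ⊤_ C ⟶ X} (hp : p ∈ T) : (Cg T).Factors p := by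
  haveI : Mono p := point_mono p
  have hg := cg_isGLB hmc T
  have hmk : Subobject.mk p ≤ Cg T := by
    apply hg.2
    intro S hS
    exact Subobject.mk_le_of_comm (S.factorThru p (hS p hp)) (Subobject.factorThru_arrow _ _ _)
  exact Subobject.factors_of_le p hmk (Subobject.mk_factors_self p)

lemma cg_mono [HasTerminal C] {X : C} (hmc : MonoCompleteAt X)
    {T T' : Set (⊤_ C ⟶ X)} (h : T ⊆ T') : Cg T ≤ Cg T' := by
  apply (cg_isGLB hmc T').2
  intro S hS
  exact (cg_isGLB hmc T).1 (fun p hp => hS p (h hp))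


/-- The closure operator `cl` is topological: it preserves finite unions. -/
theorem cl_topological
    [WellPowered.{v} C] [HasFiniteLimits C] [HasImages C] [StableImages C] [CoherentJoins C]
    (hnt : NonTrivialCat C) (hwp : WellPointed C) (hpt : EnoughPoints C)
    (hmc : MonoComplete C) (X : C) :
    cl (∅ : Set (⊤_ C ⟶ X)) = ∅ ∧
      ∀ T₁ T₂ : Set (⊤_ C ⟶ X), cl (T₁ ∪ T₂) = cl T₁ ∪ cl T₂ := by
  constructor
  · ext p
    simp only [Set.mem_empty_iff_false, iff_false]
    intro hp
    have hbot : IsBotIn (Cg (∅ : Set (⊤_ C ⟶ X))) := fun S =>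
      (cg_isGLB (hmc X) ∅).1 (fun q hq => absurd hq (Set.notMem_empty q))
    exact absurd_of_point_in_bot hnt hwp hpt hbot hp
  · intro T₁ T₂
    apply Set.Subset.antisymm
    · intro p hp
      obtain ⟨U, hU⟩ := CoherentJoins.exists_sup (Cg T₁) (Cg T₂)
      have hle : Cg (T₁ ∪ T₂) ≤ U := by
        apply (cg_isGLB (hmc X) (T₁ ∪ T₂)).1
        intro q hq
        rcases hq with h | h
        · exact Subobject.factors_of_le q (hU.1 (by simp)) (cg_factors (hmc X) h)
        · exact Subobject.factors_of_le q (hU.1 (by simp)) (cg_factors (hmc X) h)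
      have hpU : U.Factors p := Subobject.factors_of_le p hle hp
      exact factors_sup hpt hU hpU
    · rintro p (hp | hp)
      · exact Subobject.factors_of_le p (cg_mono (hmc X) Set.subset_union_left) hp
      · exact Subobject.factors_of_le p (cg_mono (hmc X) Set.subset_union_right) hp


end Paper
end
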